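/- Fix N ≥ 1 and let indices range over ℤ/Nℤ (periodic boundary conditions). Let δx > 0, and for each n ∈ ℕ let δt_n > 0, u^n : ℤ/Nℤ → ℝ be interface velocities and ρ^n : ℤ/Nℤ → ℝ cell values defined recursively as follows: p^n : ℤ/Nℤ → ℝ satisfies (p^n_{i+1} − 2p^n_i + p^n_{i−1})/δx² = (1/δx)(A(u^n_{i+1}, ρ^n_i, ρ^n_{i+1}) − A(u^n_i, ρ^n_{i−1}, ρ^n_i)); w^n_i = −(p^n_i − p^n_{i−1})/δx; and ρ^{n+1}_i = ρ^n_i − (δt_n/δx)(A(u^n_{i+1}, ρ^n_i, ρ^n_{i+1}) − A(u^n_i, ρ^n_{i−1}, ρ^n_i)) − (δt_n/δx)(A(w^n_{i+1}, ρ^n_i, ρ^n_{i+1}) − A(w^n_i, ρ^n_{i−1}, ρ^n_i)), where A(v, a, b) = v·a if v ≥ 0 and v·b if v < 0. Assume each time step satisfies the CFL condition δt_n · (max_i |u^n_i| + max_i |w^n_i|) ≤ δx/2. If 0 ≤ ρ^0_i ≤ 1 for all i, then 0 ≤ ρ^n_i ≤ 1 for all i and all n (discrete maximum principle). -/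

import Mathlib

/-- The upwind numerical flux: `A(v, ρ⁻, ρ⁺) = v·ρ⁻` if `v ≥ 0` and `v·ρ⁺` if `v < 0`. -/
noncomputable def upwindFlux (v a b : ℝ) : ℝ := if 0 ≤ v then v * a else v * b

lemma upwind_eq (v a b : ℝ) :
    upwindFlux v a b = max v 0 * a - max (-v) 0 * b := by
  unfold upwindFlux
  rcases le_or_gt 0 v with h | h
  · rw [if_pos h, max_eq_left h, max_eq_right (neg_nonpos.mpr h)]; ring
  · rw [if_neg (not_le.mpr h), max_eq_right h.le, max_eq_left (neg_nonneg.mpr h.le)]; ring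

lemma max_sub_max_neg (v : ℝ) : max v 0 - max (-v) 0 = v := by
  rcases le_or_gt 0 v with h | h
  · rw [max_eq_left h, max_eq_right (neg_nonpos.mpr h)]; ring
  · rw [max_eq_right h.le, max_eq_left (neg_nonneg.mpr h.le)]; ring

lemma step_bounds (l up um vp vm wp wm xp xm a b c a' : ℝ)
    (hl : 0 ≤ l)
    (hum : 0 ≤ um) (hvp : 0 ≤ vp) (hwm : 0 ≤ wm) (hxp : 0 ≤ xp)
    (hC1 : l * (up + vm + wp + xm) ≤ 1) (hC2 : l * (wp + xm) ≤ 1)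
    (ha0 : 0 ≤ a) (ha1 : a ≤ 1) (hb0 : 0 ≤ b) (hb1 : b ≤ 1) (hc0 : 0 ≤ c) (hc1 : c ≤ 1)
    (hdiv : (wp - wm) - (xp - xm) = -((up * b - um * c) - (vp * a - vm * b)))
    (he : a' = b - l * ((up * b - um * c) - (vp * a - vm * b))
             - l * ((wp * b - wm * c) - (xp * a - xm * b))) :
    0 ≤ a' ∧ a' ≤ 1 := by
  constructor
  · have e1 : a' = (1 - l * (up + vm + wp + xm)) * b
        + (l * (vp + xp)) * a + (l * (um + wm)) * c := by rw [he]; ring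
    have t1 : 0 ≤ (1 - l * (up + vm + wp + xm)) * b :=
      mul_nonneg (by linarith) hb0
    have t2 : 0 ≤ (l * (vp + xp)) * a :=
      mul_nonneg (mul_nonneg hl (by linarith)) ha0
    have t3 : 0 ≤ (l * (um + wm)) * c :=
      mul_nonneg (mul_nonneg hl (by linarith)) hc0
    linarith [e1.ge, e1.le]
  · have e2 : 1 - a' = (1 - l * (wp + xm)) * (1 - b)
        + (l * xp) * (1 - a) + (l * wm) * (1 - c) := by
      rw [he]; linear_combination l * hdiv
    have t1 : 0 ≤ (1 - l * (wp + xm)) * (1 - b) := mul_nonneg (by linarith) (by linarith)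
    have t2 : 0 ≤ (l * xp) * (1 - a) := mul_nonneg (mul_nonneg hl hxp) (by linarith)
    have t3 : 0 ≤ (l * wm) * (1 - c) := mul_nonneg (mul_nonneg hl hwm) (by linarith)
    linarith [e2.ge, e2.le]

/-- Discrete maximum principle for the explicit upwind finite-volume scheme for the
congested transport model on a periodic grid of `N ≥ 1` cells: if `0 ≤ ρ⁰ ≤ 1` and every
time step satisfies the CFL condition `δtₙ·(max_i |uⁿ_i| + max_i |wⁿ_i|) ≤ δx/2`, then
`0 ≤ ρⁿ ≤ 1` for all `n`. -/
theorem discrete_maximum_principle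
    (N : ℕ) (hN : 1 ≤ N) [NeZero N]
    (δx : ℝ) (hδx : 0 < δx)
    (δt : ℕ → ℝ) (hδt : ∀ n, 0 < δt n)
    (u ρ p w : ℕ → ZMod N → ℝ)
    (hPoisson : ∀ n, ∀ i : ZMod N,
      (p n (i + 1) - 2 * p n i + p n (i - 1)) / δx ^ 2 =
        (1 / δx) * (upwindFlux (u n (i + 1)) (ρ n i) (ρ n (i + 1))
                     - upwindFlux (u n i) (ρ n (i - 1)) (ρ n i)))
    (hw : ∀ n, ∀ i : ZMod N, w n i = -((p n i - p n (i - 1)) / δx))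
    (hupdate : ∀ n, ∀ i : ZMod N, ρ (n + 1) i =
      ρ n i - (δt n / δx) * (upwindFlux (u n (i + 1)) (ρ n i) (ρ n (i + 1))
                              - upwindFlux (u n i) (ρ n (i - 1)) (ρ n i))
            - (δt n / δx) * (upwindFlux (w n (i + 1)) (ρ n i) (ρ n (i + 1))
                              - upwindFlux (w n i) (ρ n (i - 1)) (ρ n i)))
    (hCFL : ∀ n, δt n * ((⨆ i : ZMod N, |u n i|) + (⨆ i : ZMod N, |w n i|)) ≤ δx / 2)
    (hinit : ∀ i : ZMod N, 0 ≤ ρ 0 i ∧ ρ 0 i ≤ 1) :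
    ∀ n, ∀ i : ZMod N, 0 ≤ ρ n i ∧ ρ n i ≤ 1 := by
  have hne : δx ≠ 0 := ne_of_gt hδx
  intro n
  induction n with
  | zero => exact hinit
  | succ n ih =>
    intro i
    have hl : 0 ≤ δt n / δx := div_nonneg (hδt n).le hδx.le
    set Su := ⨆ k : ZMod N, |u n k| with hSudef
    set Sw := ⨆ k : ZMod N, |w n k| with hSwdef
    have hSu : ∀ j : ZMod N, |u n j| ≤ Su :=
      fun j => le_ciSup (Finite.bddAbove_range (fun k : ZMod N => |u n k|)) j
    have hSw : ∀ j : ZMod N, |w n j| ≤ Sw :=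
      fun j => le_ciSup (Finite.bddAbove_range (fun k : ZMod N => |w n k|)) j
    have hSu0 : 0 ≤ Su := le_trans (abs_nonneg _) (hSu i)
    have hSw0 : 0 ≤ Sw := le_trans (abs_nonneg _) (hSw i)
    have hCFL' : (δt n / δx) * (Su + Sw) ≤ 1 / 2 := by
      rw [div_mul_eq_mul_div, div_le_div_iff₀ hδx (by norm_num : (0:ℝ) < 2)]
      have := hCFL n
      nlinarith
    -- bounds on the max/min parts
    have hmax_le : ∀ v S : ℝ, |v| ≤ S → max v 0 ≤ S :=
      fun v S h => max_le (le_trans (le_abs_self v) h) (le_trans (abs_nonneg v) h)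
    have hmaxneg_le : ∀ v S : ℝ, |v| ≤ S → max (-v) 0 ≤ S :=
      fun v S h => max_le (le_trans (neg_le_abs v) h) (le_trans (abs_nonneg v) h)
    have hC1 : (δt n / δx) * (max (u n (i+1)) 0 + max (-(u n i)) 0
        + max (w n (i+1)) 0 + max (-(w n i)) 0) ≤ 1 := by
      have b1 := hmax_le _ _ (hSu (i+1))
      have b2 := hmaxneg_le _ _ (hSu i)
      have b3 := hmax_le _ _ (hSw (i+1))
      have b4 := hmaxneg_le _ _ (hSw i)
      have hsum : max (u n (i+1)) 0 + max (-(u n i)) 0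
          + max (w n (i+1)) 0 + max (-(w n i)) 0 ≤ 2 * (Su + Sw) := by linarith
      have h2 := mul_le_mul_of_nonneg_left hsum hl
      have h3 : (δt n / δx) * (2 * (Su + Sw)) = 2 * ((δt n / δx) * (Su + Sw)) := by ring
      linarith
    have hC2 : (δt n / δx) * (max (w n (i+1)) 0 + max (-(w n i)) 0) ≤ 1 := by
      have b3 := hmax_le _ _ (hSw (i+1))
      have b4 := hmaxneg_le _ _ (hSw i)
      have hsum : max (w n (i+1)) 0 + max (-(w n i)) 0 ≤ 2 * (Su + Sw) := by linarith
      have h2 := mul_le_mul_of_nonneg_left hsum hl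
      have h3 : (δt n / δx) * (2 * (Su + Sw)) = 2 * ((δt n / δx) * (Su + Sw)) := by ring
      linarith
    -- discrete divergence-free identity from the Poisson equation
    have key : p n (i+1) - 2 * p n i + p n (i-1) =
        δx * (upwindFlux (u n (i + 1)) (ρ n i) (ρ n (i + 1))
              - upwindFlux (u n i) (ρ n (i - 1)) (ρ n i)) := by
      have h := hPoisson n i
      field_simp at h
      apply mul_right_cancel₀ hne
      linear_combination δx * h
    have hi1 : (i + 1 : ZMod N) - 1 = i := by ring
    have hwd : w n (i+1) - w n i =
        -(upwindFlux (u n (i + 1)) (ρ n i) (ρ n (i + 1))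
          - upwindFlux (u n i) (ρ n (i - 1)) (ρ n i)) := by
      rw [hw n (i+1), hw n i, hi1]
      field_simp
      linarith
    have hdiv : (max (w n (i+1)) 0 - max (-(w n (i+1))) 0)
        - (max (w n i) 0 - max (-(w n i)) 0) =
        -((max (u n (i+1)) 0 * ρ n i - max (-(u n (i+1))) 0 * ρ n (i+1))
          - (max (u n i) 0 * ρ n (i-1) - max (-(u n i)) 0 * ρ n i)) := by
      rw [max_sub_max_neg, max_sub_max_neg]
      rw [upwind_eq, upwind_eq] at hwd
      exact hwd
    have he : ρ (n+1) i = ρ n i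
        - (δt n / δx) * ((max (u n (i+1)) 0 * ρ n i - max (-(u n (i+1))) 0 * ρ n (i+1))
            - (max (u n i) 0 * ρ n (i-1) - max (-(u n i)) 0 * ρ n i))
        - (δt n / δx) * ((max (w n (i+1)) 0 * ρ n i - max (-(w n (i+1))) 0 * ρ n (i+1))
            - (max (w n i) 0 * ρ n (i-1) - max (-(w n i)) 0 * ρ n i)) := by
      rw [hupdate n i]
      simp only [upwind_eq]
    exact step_bounds (δt n / δx)
      (max (u n (i+1)) 0) (max (-(u n (i+1))) 0) (max (u n i) 0) (max (-(u n i)) 0)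
      (max (w n (i+1)) 0) (max (-(w n (i+1))) 0) (max (w n i) 0) (max (-(w n i)) 0)
      (ρ n (i-1)) (ρ n i) (ρ n (i+1)) (ρ (n+1) i)
      hl (le_max_right _ _) (le_max_right _ _) (le_max_right _ _) (le_max_right _ _)
      hC1 hC2
      (ih (i-1)).1 (ih (i-1)).2 (ih i).1 (ih i).2 (ih (i+1)).1 (ih (i+1)).2
      hdiv he
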